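/- (Lemma 1, α-remainder / von Mises expansion for α(P).) Under the setup and Assumptions A4 and A5, let ε₁ : ℝ^p × ℝ → ℝ be measurable with ε₁(L*, Y) a version of E[E | σ(L*, Y)] under μ(·|{A = 1, R = 1}). Let η̄₁ : ℝ^p → ℝ and ε̄₁ : ℝ^p × ℝ → ℝ be any bounded measurable functions with η̄₁ ≥ ε' > 0 everywhere. Then E[A·(1 − R/η̄₁(L*))·ε̄₁(L*, Y)] + E[A·R·E/η̄₁(L*)] − E[A·ε₁(L*, Y)] = E[A·(ε̄₁(L*, Y) − ε₁(L*, Y))·(1 − η₁(L*)/η̄₁(L*))]. -/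

import Mathlib

open MeasureTheory ProbabilityTheory
open scoped ENNReal ProbabilityTheory

set_option linter.unusedVariables false

section AuxLemmas

variable {Ω : Type*}

/-- bounded a.e.-measurable implies integrable on a finite measure -/
lemma aux_int [𝓕 : MeasurableSpace Ω] (μ : Measure Ω) [IsFiniteMeasure μ] {f : Ω → ℝ}
    (hf : AEStronglyMeasurable f μ)
    {C : ℝ} (hC : ∀ᵐ ω ∂μ, |f ω| ≤ C) : Integrable f μ :=
  ⟨hf, HasFiniteIntegral.of_bounded (C := C) (by simpa [Real.norm_eq_abs] using hC)⟩

lemma aux_mar [𝓕 : MeasurableSpace Ω] [StandardBorelSpace Ω]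
    {α β : Type*} [mα : MeasurableSpace α] [mβ : MeasurableSpace β]
    (μ : Measure Ω) [IsProbabilityMeasure μ]
    {U : Ω → α} {V : Ω → β} {R : Ω → ℝ}
    (hU : Measurable U) (hV : Measurable V) (hR : Measurable R)
    (hR01 : ∀ ω, R ω = 0 ∨ R ω = 1)
    (hm : MeasurableSpace.comap U mα ≤ 𝓕)
    (hMAR : CondIndepFun (MeasurableSpace.comap U mα) hm R V μ)
    (η : α → ℝ) (hη : Measurable η)
    (hηver : (fun ω => η (U ω)) =ᵐ[μ] μ[R | MeasurableSpace.comap U mα])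
    (G : α × β → ℝ) (hG : Measurable G) :
    ∫ ω, R ω * G (U ω, V ω) ∂μ = ∫ ω, η (U ω) * G (U ω, V ω) ∂μ := by
  have hRnn : ∀ ω, 0 ≤ R ω := fun ω => by rcases hR01 ω with h | h <;> simp [h]
  have hRle : ∀ ω, R ω ≤ 1 := fun ω => by rcases hR01 ω with h | h <;> simp [h]
  have hRabs : ∀ ω, |R ω| ≤ 1 := fun ω => by
    rw [abs_of_nonneg (hRnn ω)]; exact hRle ω
  have hRint : Integrable R μ := aux_int μ hR.aestronglyMeasurable (ae_of_all _ hRabs)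
  have hUm : Measurable[MeasurableSpace.comap U mα] U := measurable_iff_comap_le.mpr le_rfl
  have hηnn : ∀ᵐ ω ∂μ, 0 ≤ η (U ω) := by
    filter_upwards [hηver,
      condExp_nonneg (m := MeasurableSpace.comap U mα) (μ := μ) (f := R) (ae_of_all μ hRnn)]
      with ω h1 h2
    rw [h1]; exact h2
  have hηle : ∀ᵐ ω ∂μ, η (U ω) ≤ 1 := by
    have h1 : μ[R|MeasurableSpace.comap U mα] ≤ᵐ[μ]
        μ[(fun _ => (1:ℝ))|MeasurableSpace.comap U mα] :=
      condExp_mono hRint (integrable_const 1) (ae_of_all μ hRle)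
    filter_upwards [hηver, h1] with ω h2 h3
    rw [h2]
    calc (μ[R|MeasurableSpace.comap U mα]) ω
        ≤ (μ[(fun _ => (1:ℝ))|MeasurableSpace.comap U mα]) ω := h3
      _ = 1 := by rw [condExp_const hm]
  have hηabs : ∀ᵐ ω ∂μ, |η (U ω)| ≤ 1 := by
    filter_upwards [hηnn, hηle] with ω h1 h2
    rw [abs_of_nonneg h1]; exact h2
  have hηUmeas : Measurable fun ω => η (U ω) := hη.comp hU
  have hηint : Integrable (fun ω => η (U ω)) μ := aux_int μ hηUmeas.aestronglyMeasurable hηabs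
  -- the key rectangle identity
  have key : ∀ s : Set α, ∀ t : Set β, MeasurableSet s → MeasurableSet t →
      ∫ ω in U ⁻¹' s ∩ V ⁻¹' t, R ω ∂μ = ∫ ω in U ⁻¹' s ∩ V ⁻¹' t, η (U ω) ∂μ := by
    intro s t hs ht
    have hUs : MeasurableSet[MeasurableSpace.comap U mα] (U ⁻¹' s) := ⟨s, hs, rfl⟩
    have hUs0 : MeasurableSet (U ⁻¹' s) := hm _ hUs
    have hVt : MeasurableSet (V ⁻¹' t) := hV ht
    set ψ : Ω → ℝ := (V ⁻¹' t).indicator (fun _ => (1:ℝ)) with hψ_def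
    have hψmeas : Measurable ψ := measurable_const.indicator hVt
    have hψabs : ∀ ω, |ψ ω| ≤ 1 := fun ω => by
      by_cases h : ω ∈ V ⁻¹' t <;> simp [hψ_def, Set.indicator_apply, h]
    have hψint : Integrable ψ μ := aux_int μ hψmeas.aestronglyMeasurable (ae_of_all _ hψabs)
    have hRψ : (fun ω => R ω * ψ ω) = (R ⁻¹' {1} ∩ V ⁻¹' t).indicator (fun _ => (1:ℝ)) := by
      funext ω
      by_cases hv : ω ∈ V ⁻¹' t
      · rcases hR01 ω with h | h <;>
          simp [hψ_def, Set.indicator_apply, hv, h]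
      · simp [hψ_def, Set.indicator_apply, hv]
    have hRψint : Integrable (fun ω => R ω * ψ ω) μ := by
      refine aux_int μ (hR.mul hψmeas).aestronglyMeasurable (C := 1) (ae_of_all _ fun ω => ?_)
      calc |R ω * ψ ω| = |R ω| * |ψ ω| := abs_mul _ _
        _ ≤ 1 * 1 := mul_le_mul (hRabs ω) (hψabs ω) (abs_nonneg _) zero_le_one
        _ = 1 := one_mul 1
    have hRind : R = (R ⁻¹' {1}).indicator (fun _ => (1:ℝ)) := by
      funext ω; rcases hR01 ω with h | h <;> simp [Set.indicator_apply, h]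
    have hmar := (condIndepFun_iff_condExp_inter_preimage_eq_mul (hm' := hm) hR hV).mp hMAR
      {1} t (measurableSet_singleton 1) ht
    -- a.e. identity : μ[R * ψ|m] =ᵐ (η∘U) * μ[ψ|m]
    have hae : μ[fun ω => R ω * ψ ω|MeasurableSpace.comap U mα] =ᵐ[μ]
        fun ω => η (U ω) * (μ[ψ|MeasurableSpace.comap U mα]) ω := by
      have h1 : μ[fun ω => R ω * ψ ω|MeasurableSpace.comap U mα]
          = μ⟦R ⁻¹' {1} ∩ V ⁻¹' t | MeasurableSpace.comap U mα⟧ := by rw [hRψ]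
      have h2 : μ⟦R ⁻¹' {1} | MeasurableSpace.comap U mα⟧ = μ[R|MeasurableSpace.comap U mα] := by
        conv_rhs => rw [hRind]
      have h3 : μ⟦V ⁻¹' t | MeasurableSpace.comap U mα⟧ = μ[ψ|MeasurableSpace.comap U mα] := rfl
      rw [h1]
      filter_upwards [hmar, hηver] with ω h4 h5
      rw [h4, h2, h3, ← h5]
    set φ : Ω → ℝ := (U ⁻¹' s).indicator (fun ω => η (U ω)) with hφ_def
    have hφsm : StronglyMeasurable[MeasurableSpace.comap U mα] φ :=
      ((hη.comp hUm).indicator hUs).stronglyMeasurable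
    have hφmeas : Measurable φ := (hη.comp hU).indicator hUs0
    have hφnorm : ∀ᵐ ω ∂μ, ‖φ ω‖ ≤ 1 := by
      filter_upwards [hηabs] with ω h
      by_cases hw : ω ∈ U ⁻¹' s <;>
        simp [hφ_def, Set.indicator_apply, hw, Real.norm_eq_abs, h]
    have hφψint : Integrable (fun ω => φ ω * ψ ω) μ := by
      refine aux_int μ (hφmeas.mul hψmeas).aestronglyMeasurable (C := 1) ?_
      filter_upwards [hφnorm] with ω h
      calc |φ ω * ψ ω| = |φ ω| * |ψ ω| := abs_mul _ _
        _ ≤ 1 * 1 := by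
            refine mul_le_mul ?_ (hψabs ω) (abs_nonneg _) zero_le_one
            simpa [Real.norm_eq_abs] using h
        _ = 1 := one_mul 1
    have pullout : μ[φ * ψ|MeasurableSpace.comap U mα] =ᵐ[μ]
        φ * μ[ψ|MeasurableSpace.comap U mα] :=
      condExp_stronglyMeasurable_mul_of_bound hm hφsm hψint 1 hφnorm
    calc ∫ ω in U ⁻¹' s ∩ V ⁻¹' t, R ω ∂μ
        = ∫ ω in U ⁻¹' s, (V ⁻¹' t).indicator R ω ∂μ := (setIntegral_indicator hVt).symm
      _ = ∫ ω in U ⁻¹' s, R ω * ψ ω ∂μ := by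
          refine setIntegral_congr_fun hUs0 fun ω _ => ?_
          by_cases hw : ω ∈ V ⁻¹' t <;> simp [hψ_def, Set.indicator_apply, hw]
      _ = ∫ ω in U ⁻¹' s, (μ[fun ω => R ω * ψ ω|MeasurableSpace.comap U mα]) ω ∂μ :=
          (setIntegral_condExp hm hRψint hUs).symm
      _ = ∫ ω in U ⁻¹' s, η (U ω) * (μ[ψ|MeasurableSpace.comap U mα]) ω ∂μ := by
          refine setIntegral_congr_ae hUs0 ?_
          filter_upwards [hae] with ω h _
          exact h
      _ = ∫ ω, φ ω * (μ[ψ|MeasurableSpace.comap U mα]) ω ∂μ := by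
          rw [← integral_indicator hUs0]
          refine integral_congr_ae (Filter.Eventually.of_forall fun ω => ?_)
          by_cases hw : ω ∈ U ⁻¹' s <;> simp [hφ_def, Set.indicator_apply, hw]
      _ = ∫ ω, (μ[φ * ψ|MeasurableSpace.comap U mα]) ω ∂μ := by
          refine (integral_congr_ae ?_).symm
          filter_upwards [pullout] with ω h
          simpa using h
      _ = ∫ ω, φ ω * ψ ω ∂μ := by
          have := integral_condExp hm (μ := μ) (f := φ * ψ)
          simp only [Pi.mul_apply] at this ⊢
          exact this
      _ = ∫ ω in U ⁻¹' s, η (U ω) * ψ ω ∂μ := by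
          rw [← integral_indicator hUs0]
          refine integral_congr_ae (Filter.Eventually.of_forall fun ω => ?_)
          by_cases hw : ω ∈ U ⁻¹' s <;> simp [hφ_def, Set.indicator_apply, hw]
      _ = ∫ ω in U ⁻¹' s, (V ⁻¹' t).indicator (fun ω => η (U ω)) ω ∂μ := by
          refine setIntegral_congr_fun hUs0 fun ω _ => ?_
          by_cases hw : ω ∈ V ⁻¹' t <;> simp [hψ_def, Set.indicator_apply, hw]
      _ = ∫ ω in U ⁻¹' s ∩ V ⁻¹' t, η (U ω) ∂μ := setIntegral_indicator hVt
  -- measures with densities R and η∘U pushed to α × β agree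
  set T : Ω → α × β := fun ω => (U ω, V ω) with hT_def
  have hT : Measurable T := hU.prodMk hV
  set ρR : Ω → ℝ≥0∞ := fun ω => ENNReal.ofReal (R ω) with hρR_def
  set ρη : Ω → ℝ≥0∞ := fun ω => ENNReal.ofReal (η (U ω)) with hρη_def
  have hρRmeas : Measurable ρR := ENNReal.measurable_ofReal.comp hR
  have hρηmeas : Measurable ρη := ENNReal.measurable_ofReal.comp hηUmeas
  have hfinR : IsFiniteMeasure (μ.withDensity ρR) := by
    refine isFiniteMeasure_withDensity ?_
    have : ∫⁻ ω, ρR ω ∂μ ≤ ∫⁻ _, 1 ∂μ :=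
      lintegral_mono fun ω => by
        simpa [hρR_def] using ENNReal.ofReal_le_one.mpr (hRle ω)
    simp only [lintegral_one, measure_univ, mul_one] at this
    exact ne_top_of_le_ne_top ENNReal.one_ne_top this
  have hfinη : IsFiniteMeasure (μ.withDensity ρη) := by
    refine isFiniteMeasure_withDensity ?_
    have : ∫⁻ ω, ρη ω ∂μ ≤ ∫⁻ _, 1 ∂μ := by
      refine lintegral_mono_ae ?_
      filter_upwards [hηle] with ω h
      simpa [hρη_def] using ENNReal.ofReal_le_one.mpr h
    simp only [lintegral_one, measure_univ, mul_one] at this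
    exact ne_top_of_le_ne_top ENNReal.one_ne_top this
  have hrect : ∀ s : Set α, ∀ t : Set β, MeasurableSet s → MeasurableSet t →
      ((μ.withDensity ρR).map T) (s ×ˢ t) = ((μ.withDensity ρη).map T) (s ×ˢ t) := by
    intro s t hs ht
    have hE : MeasurableSet (U ⁻¹' s ∩ V ⁻¹' t) := (hU hs).inter (hV ht)
    have hTs : T ⁻¹' (s ×ˢ t) = U ⁻¹' s ∩ V ⁻¹' t := by rw [hT_def]; exact Set.mk_preimage_prod U V
    rw [Measure.map_apply hT (hs.prod ht), Measure.map_apply hT (hs.prod ht),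
      withDensity_apply _ (by rw [hTs]; exact hE), withDensity_apply _ (by rw [hTs]; exact hE),
      hTs]
    have hRrestr : Integrable R (μ.restrict (U ⁻¹' s ∩ V ⁻¹' t)) := hRint.restrict
    have hηrestr : Integrable (fun ω => η (U ω)) (μ.restrict (U ⁻¹' s ∩ V ⁻¹' t)) :=
      hηint.restrict
    rw [hρR_def, hρη_def,
      ← ofReal_integral_eq_lintegral_ofReal hRrestr (ae_restrict_of_ae (ae_of_all _ hRnn)),
      ← ofReal_integral_eq_lintegral_ofReal hηrestr (ae_restrict_of_ae hηnn),
      key s t hs ht]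
  haveI : IsFiniteMeasure ((μ.withDensity ρR).map T) := Measure.isFiniteMeasure_map _ _
  have hν : (μ.withDensity ρR).map T = (μ.withDensity ρη).map T := by
    refine ext_of_generate_finite _ generateFrom_prod.symm isPiSystem_prod ?_ ?_
    · rintro _ ⟨s, hs, t, ht, rfl⟩
      exact hrect s t hs ht
    · have := hrect Set.univ Set.univ MeasurableSet.univ MeasurableSet.univ
      simpa [Set.univ_prod_univ] using this
  -- convert to Bochner integrals
  have hGT : Measurable fun ω => G (T ω) := hG.comp hT
  have convR : ∫ ω, R ω * G (U ω, V ω) ∂μ = ∫ y, G y ∂((μ.withDensity ρR).map T) := by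
    rw [integral_map hT.aemeasurable hG.aestronglyMeasurable]
    have h1 : μ.withDensity ρR = μ.withDensity fun ω => ((R ω).toNNReal : ℝ≥0∞) := rfl
    rw [h1, integral_withDensity_eq_integral_smul (f := fun ω => (R ω).toNNReal)
      (measurable_real_toNNReal.comp hR) (fun ω => G (T ω))]
    refine integral_congr_ae (Filter.Eventually.of_forall fun ω => ?_)
    simp [hT_def, NNReal.smul_def, Real.coe_toNNReal _ (hRnn ω)]
  have convη : ∫ ω, η (U ω) * G (U ω, V ω) ∂μ = ∫ y, G y ∂((μ.withDensity ρη).map T) := by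
    rw [integral_map hT.aemeasurable hG.aestronglyMeasurable]
    have h1 : μ.withDensity ρη = μ.withDensity fun ω => ((η (U ω)).toNNReal : ℝ≥0∞) := rfl
    rw [h1, integral_withDensity_eq_integral_smul (f := fun ω => (η (U ω)).toNNReal)
      (measurable_real_toNNReal.comp hηUmeas) (fun ω => G (T ω))]
    refine integral_congr_ae ?_
    filter_upwards [hηnn] with ω h
    simp [hT_def, NNReal.smul_def, Real.coe_toNNReal _ h]
  rw [convR, convη, hν]

end AuxLemmas

set_option maxHeartbeats 1000000 in
/-- **Lemma 1 (α-remainder / von Mises expansion for α(P)).** The remainder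
`α(P̄) − α(P) + ∫ α̇*_{P̄} dP` equals a second-order product of nuisance errors. -/
theorem stmt_8
    {Ω : Type*} [𝓕 : MeasurableSpace Ω] [StandardBorelSpace Ω] [Nonempty Ω]
    (μ : Measure Ω) [IsProbabilityMeasure μ]
    {p q : ℕ}
    (Lstar : Ω → Fin p → ℝ) (L : Ω → Fin q → ℝ) (A R Y : Ω → ℝ)
    (hLstar : Measurable Lstar) (hL : Measurable L)
    (hA : Measurable A) (hR : Measurable R) (hY : Measurable Y)
    (hA01 : ∀ ω, A ω = 0 ∨ A ω = 1) (hR01 : ∀ ω, R ω = 0 ∨ R ω = 1)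
    (hY2 : MemLp Y 2 μ)
    (g : (Fin q → ℝ) → ℝ → ℝ) (hg : Measurable (Function.uncurry g))
    (hg01 : ∀ x a, g x a = 0 ∨ g x a = 1)
    -- Assumption A4 (MAR): R ⫫ (L, Y) | σ(L*, A)
    (hMAR : CondIndepFun (MeasurableSpace.comap (fun ω => (Lstar ω, A ω)) inferInstance)
      ((hLstar.prodMk hA).comap_le) R (fun ω => (L ω, Y ω)) μ)
    -- Assumption A5 (missingness positivity)
    (η : (Fin p → ℝ) → ℝ → ℝ) (hη : Measurable (Function.uncurry η))
    (hηver : (fun ω => η (Lstar ω) (A ω)) =ᵐ[μ]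
      μ[R|MeasurableSpace.comap (fun ω => (Lstar ω, A ω)) inferInstance])
    (ε₀ : ℝ) (hε₀ : 0 < ε₀)
    (hηpos : ∀ᵐ ω ∂μ, ε₀ ≤ η (Lstar ω) 0 ∧ ε₀ ≤ η (Lstar ω) 1)
    (hA1R : 0 < μ {ω | A ω = 1 ∧ R ω = 1})
    -- true nuisance ε₁
    (ε₁f : (Fin p → ℝ) → ℝ → ℝ) (hε₁f : Measurable (Function.uncurry ε₁f))
    (hε₁ver : (fun ω => ε₁f (Lstar ω) (Y ω)) =ᵐ[μ[|{ω | A ω = 1 ∧ R ω = 1}]]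
      (μ[|{ω | A ω = 1 ∧ R ω = 1}])[(fun ω => g (L ω) (A ω))|MeasurableSpace.comap
          (fun ω => (Lstar ω, Y ω)) inferInstance])
    -- estimated (barred) nuisances: bounded measurable, η̄₁ bounded below
    (ηbar₁ : (Fin p → ℝ) → ℝ) (hηbar₁ : Measurable ηbar₁)
    (Cη : ℝ) (hηbar₁bd : ∀ x, |ηbar₁ x| ≤ Cη)
    (ε' : ℝ) (hε' : 0 < ε') (hηbar₁lb : ∀ x, ε' ≤ ηbar₁ x)
    (εbar₁ : (Fin p → ℝ) → ℝ → ℝ) (hεbar₁ : Measurable (Function.uncurry εbar₁))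
    (Cε : ℝ) (hεbar₁bd : ∀ x y, |εbar₁ x y| ≤ Cε) :
    ∫ ω, A ω * (1 - R ω / ηbar₁ (Lstar ω)) * εbar₁ (Lstar ω) (Y ω) ∂μ
      + ∫ ω, A ω * R ω * g (L ω) (A ω) / ηbar₁ (Lstar ω) ∂μ
      - ∫ ω, A ω * ε₁f (Lstar ω) (Y ω) ∂μ
    = ∫ ω, A ω * (εbar₁ (Lstar ω) (Y ω) - ε₁f (Lstar ω) (Y ω))
          * (1 - η (Lstar ω) 1 / ηbar₁ (Lstar ω)) ∂μ := by
  -- basic facts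
  have hA01' : ∀ ω, 0 ≤ A ω ∧ A ω ≤ 1 := fun ω => by
    rcases hA01 ω with h | h <;> simp [h]
  have hAabs : ∀ ω, |A ω| ≤ 1 := fun ω => by
    rw [abs_of_nonneg (hA01' ω).1]; exact (hA01' ω).2
  have hRabs : ∀ ω, |R ω| ≤ 1 := fun ω => by
    rcases hR01 ω with h | h <;> simp [h]
  have hgabs : ∀ x a, |g x a| ≤ 1 := fun x a => by
    rcases hg01 x a with h | h <;> simp [h]
  have hRint : Integrable R μ := aux_int μ hR.aestronglyMeasurable (ae_of_all _ hRabs)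
  -- measurability of composites
  have he : Measurable fun ω => εbar₁ (Lstar ω) (Y ω) := hεbar₁.comp (hLstar.prodMk hY)
  have hEf : Measurable fun ω => ε₁f (Lstar ω) (Y ω) := hε₁f.comp (hLstar.prodMk hY)
  have hgc : Measurable fun ω => g (L ω) (A ω) := hg.comp (hL.prodMk hA)
  have hh : Measurable fun ω => ηbar₁ (Lstar ω) := hηbar₁.comp hLstar
  have hk : Measurable fun ω => η (Lstar ω) 1 :=
    hη.comp (hLstar.prodMk measurable_const)
  have hηA : Measurable fun ω => η (Lstar ω) (A ω) := hη.comp (hLstar.prodMk hA)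
  have hhpos : ∀ ω, 0 < ηbar₁ (Lstar ω) := fun ω => lt_of_lt_of_le hε' (hηbar₁lb _)
  have hhinv_bd : ∀ ω, |(ηbar₁ (Lstar ω))⁻¹| ≤ ε'⁻¹ := fun ω => by
    rw [abs_of_nonneg (inv_nonneg.mpr (hhpos ω).le)]
    exact inv_anti₀ hε' (hηbar₁lb _)
  -- a.e. bounds on η (L*, A) from the conditional-expectation version
  have hηA_nn : ∀ᵐ ω ∂μ, 0 ≤ η (Lstar ω) (A ω) := by
    filter_upwards [hηver, condExp_nonneg
      (m := MeasurableSpace.comap (fun ω => (Lstar ω, A ω)) inferInstance) (μ := μ) (f := R)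
      (ae_of_all μ fun ω => by rcases hR01 ω with h | h <;> simp [h])] with ω h1 h2
    rw [h1]; exact h2
  have hηA_le : ∀ᵐ ω ∂μ, η (Lstar ω) (A ω) ≤ 1 := by
    have h1 : μ[R|MeasurableSpace.comap (fun ω => (Lstar ω, A ω)) inferInstance] ≤ᵐ[μ]
        μ[(fun _ => (1:ℝ))|MeasurableSpace.comap (fun ω => (Lstar ω, A ω)) inferInstance] :=
      condExp_mono hRint (integrable_const 1)
        (ae_of_all μ fun ω => by rcases hR01 ω with h | h <;> simp [h])
    filter_upwards [hηver, h1] with ω h2 h3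
    rw [h2]
    refine le_trans h3 ?_
    rw [condExp_const ((hLstar.prodMk hA).comap_le)]
  have hηA_abs : ∀ᵐ ω ∂μ, |η (Lstar ω) (A ω)| ≤ 1 := by
    filter_upwards [hηA_nn, hηA_le] with ω h1 h2; rw [abs_of_nonneg h1]; exact h2
  -- the MAR transfer principle
  have mar : ∀ G : ((Fin p → ℝ) × ℝ) × ((Fin q → ℝ) × ℝ) → ℝ, Measurable G →
      ∫ ω, R ω * G ((Lstar ω, A ω), (L ω, Y ω)) ∂μ
        = ∫ ω, η (Lstar ω) (A ω) * G ((Lstar ω, A ω), (L ω, Y ω)) ∂μ := by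
    intro G hG
    exact aux_mar μ (hLstar.prodMk hA) (hL.prodMk hY) hR hR01
      ((hLstar.prodMk hA).comap_le) hMAR (fun u => η u.1 u.2) hη hηver G hG
  -- the complete-case conditional measure
  have hSeq : {ω | A ω = 1 ∧ R ω = 1} = A ⁻¹' {1} ∩ R ⁻¹' {1} := by
    ext ω; simp [Set.mem_setOf_eq]
  have hS : MeasurableSet {ω | A ω = 1 ∧ R ω = 1} := by
    rw [hSeq]
    exact (hA (measurableSet_singleton 1)).inter (hR (measurableSet_singleton 1))
  have hSne : μ {ω | A ω = 1 ∧ R ω = 1} ≠ 0 := hA1R.ne'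
  haveI hPS : IsProbabilityMeasure (μ[|{ω | A ω = 1 ∧ R ω = 1}]) :=
    cond_isProbabilityMeasure hSne
  have hμS_toReal_ne : (μ {ω | A ω = 1 ∧ R ω = 1}).toReal ≠ 0 := by
    refine ENNReal.toReal_ne_zero.mpr ⟨hSne, measure_ne_top μ _⟩
  -- bridge between ∫ A·R·F dμ and ∫ F dμ[|S]
  have hARind : ∀ F : Ω → ℝ, (fun ω => A ω * R ω * F ω)
      = ({ω | A ω = 1 ∧ R ω = 1}).indicator F := by
    intro F; funext ω
    by_cases hw : ω ∈ {ω | A ω = 1 ∧ R ω = 1}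
    · obtain ⟨h1, h2⟩ := hw
      simp [Set.indicator_apply, h1, h2, Set.mem_setOf_eq]
    · rw [Set.indicator_of_notMem hw]
      rcases hA01 ω with h1 | h1
      · simp [h1]
      · rcases hR01 ω with h2 | h2
        · simp [h2]
        · exact absurd ⟨h1, h2⟩ hw
  have bridge : ∀ F : Ω → ℝ, ∫ ω, A ω * R ω * F ω ∂μ
      = (μ {ω | A ω = 1 ∧ R ω = 1}).toReal * ∫ ω, F ω ∂(μ[|{ω | A ω = 1 ∧ R ω = 1}]) := by
    intro F
    rw [hARind F, integral_indicator hS]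
    have hcond : ∫ ω, F ω ∂(μ[|{ω | A ω = 1 ∧ R ω = 1}])
        = (μ {ω | A ω = 1 ∧ R ω = 1}).toReal⁻¹ * ∫ ω in {ω | A ω = 1 ∧ R ω = 1}, F ω ∂μ := by
      rw [ProbabilityTheory.cond, integral_smul_measure, ENNReal.toReal_inv]
      rfl
    rw [hcond, ← mul_assoc, mul_inv_cancel₀ hμS_toReal_ne, one_mul]
  -- conditional expectation facts under μ[|S]
  have hm' : MeasurableSpace.comap (fun ω => (Lstar ω, Y ω)) inferInstance ≤ 𝓕 :=
    (hLstar.prodMk hY).comap_le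
  have hgcintS : Integrable (fun ω => g (L ω) (A ω)) (μ[|{ω | A ω = 1 ∧ R ω = 1}]) :=
    aux_int _ hgc.aestronglyMeasurable (ae_of_all _ fun ω => hgabs _ _)
  have hcexp_nn : 0 ≤ᵐ[μ[|{ω | A ω = 1 ∧ R ω = 1}]]
      (μ[|{ω | A ω = 1 ∧ R ω = 1}])[(fun ω => g (L ω) (A ω))|MeasurableSpace.comap
        (fun ω => (Lstar ω, Y ω)) inferInstance] :=
    condExp_nonneg (ae_of_all _ fun ω => by rcases hg01 (L ω) (A ω) with h | h <;> simp [h])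
  have hcexp_le : (μ[|{ω | A ω = 1 ∧ R ω = 1}])[(fun ω => g (L ω) (A ω))|MeasurableSpace.comap
        (fun ω => (Lstar ω, Y ω)) inferInstance] ≤ᵐ[μ[|{ω | A ω = 1 ∧ R ω = 1}]] fun _ => 1 := by
    have h1 := condExp_mono (μ := μ[|{ω | A ω = 1 ∧ R ω = 1}])
      (m := MeasurableSpace.comap (fun ω => (Lstar ω, Y ω)) inferInstance)
      hgcintS (integrable_const (1:ℝ))
      (ae_of_all _ fun ω => by rcases hg01 (L ω) (A ω) with h | h <;> simp [h])
    filter_upwards [h1] with ω h2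
    refine le_trans h2 ?_
    rw [condExp_const hm']
  -- |ε₁f (L*, Y)| ≤ 1 a.e. under μ[|S]
  have hEfbd_S : ∀ᵐ ω ∂(μ[|{ω | A ω = 1 ∧ R ω = 1}]), |ε₁f (Lstar ω) (Y ω)| ≤ 1 := by
    filter_upwards [hε₁ver, hcexp_nn, hcexp_le] with ω h1 h2 h3
    rw [h1, abs_of_nonneg h2]; exact h3
  -- transfer the bound to μ a.e. on {A = 1}, via MAR
  have hNset : MeasurableSet {u : (Fin p → ℝ) × ℝ | 1 < |ε₁f u.1 u.2|} :=
    measurableSet_lt measurable_const hε₁f.abs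
  have hN' : MeasurableSet {ω | (Lstar ω, Y ω) ∈ {u : (Fin p → ℝ) × ℝ | 1 < |ε₁f u.1 u.2|}} :=
    (hLstar.prodMk hY) hNset
  have hμSN : (μ[|{ω | A ω = 1 ∧ R ω = 1}])
      {ω | (Lstar ω, Y ω) ∈ {u : (Fin p → ℝ) × ℝ | 1 < |ε₁f u.1 u.2|}} = 0 := by
    have h0 := ae_iff.mp hEfbd_S
    have heq : {ω | ¬ |ε₁f (Lstar ω) (Y ω)| ≤ 1}
        = {ω | (Lstar ω, Y ω) ∈ {u : (Fin p → ℝ) × ℝ | 1 < |ε₁f u.1 u.2|}} := by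
      ext ω; simp [not_le]
    rwa [heq] at h0
  have hμN : μ ({ω | A ω = 1 ∧ R ω = 1}
      ∩ {ω | (Lstar ω, Y ω) ∈ {u : (Fin p → ℝ) × ℝ | 1 < |ε₁f u.1 u.2|}}) = 0 := by
    have h1 := ProbabilityTheory.cond_apply hS μ
      {ω | (Lstar ω, Y ω) ∈ {u : (Fin p → ℝ) × ℝ | 1 < |ε₁f u.1 u.2|}}
    rw [hμSN] at h1
    rcases mul_eq_zero.mp h1.symm with h2 | h2
    · exact absurd (ENNReal.inv_eq_zero.mp h2) (measure_ne_top μ _)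
    · exact h2
  have hindN : ∀ ω, ({u : (Fin p → ℝ) × ℝ | 1 < |ε₁f u.1 u.2|}).indicator
        (fun _ => (1:ℝ)) (Lstar ω, Y ω)
      = ({ω | (Lstar ω, Y ω) ∈ {u : (Fin p → ℝ) × ℝ | 1 < |ε₁f u.1 u.2|}}).indicator
        (fun _ => (1:ℝ)) ω := by
    intro ω
    by_cases hw : (Lstar ω, Y ω) ∈ {u : (Fin p → ℝ) × ℝ | 1 < |ε₁f u.1 u.2|}
    · rw [Set.indicator_of_mem hw, Set.indicator_of_mem
        (show ω ∈ {ω | (Lstar ω, Y ω) ∈ {u : (Fin p → ℝ) × ℝ | 1 < |ε₁f u.1 u.2|}} from hw)]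
    · rw [Set.indicator_of_notMem hw, Set.indicator_of_notMem
        (show ω ∉ {ω | (Lstar ω, Y ω) ∈ {u : (Fin p → ℝ) × ℝ | 1 < |ε₁f u.1 u.2|}} from hw)]
  have hzero1 : ∫ ω, R ω * (A ω * ({u : (Fin p → ℝ) × ℝ | 1 < |ε₁f u.1 u.2|}).indicator
      (fun _ => (1:ℝ)) (Lstar ω, Y ω)) ∂μ = 0 := by
    have heq : (fun ω => R ω * (A ω * ({u : (Fin p → ℝ) × ℝ | 1 < |ε₁f u.1 u.2|}).indicator
        (fun _ => (1:ℝ)) (Lstar ω, Y ω)))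
        = ({ω | A ω = 1 ∧ R ω = 1} ∩ {ω | (Lstar ω, Y ω)
            ∈ {u : (Fin p → ℝ) × ℝ | 1 < |ε₁f u.1 u.2|}}).indicator (fun _ => (1:ℝ)) := by
      funext ω
      rw [hindN ω]
      by_cases hw : ω ∈ {ω | A ω = 1 ∧ R ω = 1}
      · by_cases hv : ω ∈ {ω | (Lstar ω, Y ω)
            ∈ {u : (Fin p → ℝ) × ℝ | 1 < |ε₁f u.1 u.2|}}
        · rw [Set.indicator_of_mem hv, Set.indicator_of_mem (Set.mem_inter hw hv)]
          obtain ⟨h1, h2⟩ := hw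
          rw [h1, h2]; ring
        · rw [Set.indicator_of_notMem hv, Set.indicator_of_notMem
            (fun hc => hv hc.2)]
          ring
      · have : ω ∉ ({ω | A ω = 1 ∧ R ω = 1} ∩ {ω | (Lstar ω, Y ω)
            ∈ {u : (Fin p → ℝ) × ℝ | 1 < |ε₁f u.1 u.2|}}) := fun hc => hw hc.1
        rw [Set.indicator_of_notMem this]
        rcases hA01 ω with h1 | h1
        · simp [h1]
        · rcases hR01 ω with h2 | h2
          · simp [h2]
          · exact absurd ⟨h1, h2⟩ hw
    rw [heq, integral_indicator (hS.inter hN'), setIntegral_const, measureReal_def, hμN]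
    simp
  have hzero2 : ∫ ω, η (Lstar ω) (A ω) * (A ω * ({u : (Fin p → ℝ) × ℝ | 1 < |ε₁f u.1 u.2|}).indicator
      (fun _ => (1:ℝ)) (Lstar ω, Y ω)) ∂μ = 0 := by
    rw [← mar (fun z => z.1.2 * ({u : (Fin p → ℝ) × ℝ | 1 < |ε₁f u.1 u.2|}).indicator
        (fun _ => (1:ℝ)) (z.1.1, z.2.2))
      (measurable_fst.snd.mul ((measurable_const.indicator hNset).comp
        (measurable_fst.fst.prodMk measurable_snd.snd)))]
    exact hzero1
  -- a.e. on {A = 1}, |ε₁f (L*, Y)| ≤ 1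
  have hEfA : ∀ᵐ ω ∂μ, A ω = 1 → |ε₁f (Lstar ω) (Y ω)| ≤ 1 := by
    have hintz : Integrable (fun ω => η (Lstar ω) (A ω)
        * (A ω * ({u : (Fin p → ℝ) × ℝ | 1 < |ε₁f u.1 u.2|}).indicator
          (fun _ => (1:ℝ)) (Lstar ω, Y ω))) μ := by
      refine aux_int μ ((hηA.mul (hA.mul ((measurable_const.indicator hNset).comp
        (hLstar.prodMk hY)))).aestronglyMeasurable) (C := 1) ?_
      filter_upwards [hηA_abs] with ω h1
      have h2 : |({u : (Fin p → ℝ) × ℝ | 1 < |ε₁f u.1 u.2|}).indicator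
          (fun _ => (1:ℝ)) (Lstar ω, Y ω)| ≤ 1 := by
        by_cases hw : (Lstar ω, Y ω) ∈ {u : (Fin p → ℝ) × ℝ | 1 < |ε₁f u.1 u.2|} <;>
          simp [Set.indicator_apply, hw]
      rw [abs_mul, abs_mul]
      calc |η (Lstar ω) (A ω)| * (|A ω| * |({u : (Fin p → ℝ) × ℝ | 1 < |ε₁f u.1 u.2|}).indicator
            (fun _ => (1:ℝ)) (Lstar ω, Y ω)|)
          ≤ 1 * (1 * 1) :=
            mul_le_mul h1 (mul_le_mul (hAabs ω) h2 (abs_nonneg _) zero_le_one)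
              (by positivity) zero_le_one
        _ = 1 := by ring
    have hnn : 0 ≤ᵐ[μ] fun ω => η (Lstar ω) (A ω)
        * (A ω * ({u : (Fin p → ℝ) × ℝ | 1 < |ε₁f u.1 u.2|}).indicator
          (fun _ => (1:ℝ)) (Lstar ω, Y ω)) := by
      filter_upwards [hηA_nn] with ω h1
      refine mul_nonneg h1 (mul_nonneg (hA01' ω).1 ?_)
      by_cases hw : (Lstar ω, Y ω) ∈ {u : (Fin p → ℝ) × ℝ | 1 < |ε₁f u.1 u.2|} <;>
        simp [Set.indicator_apply, hw]
    have hz := (integral_eq_zero_iff_of_nonneg_ae hnn hintz).mp hzero2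
    filter_upwards [hz, hηpos] with ω h1 h2 hA1
    by_contra hc
    have hw : (Lstar ω, Y ω) ∈ {u : (Fin p → ℝ) × ℝ | 1 < |ε₁f u.1 u.2|} :=
      not_le.mp hc
    rw [Set.indicator_of_mem hw] at h1
    rw [hA1] at h1
    simp only [mul_one, one_mul] at h1
    rw [h1] at h2
    exact absurd h2.2 (not_le.mpr hε₀)
  -- pull-out property of conditional expectation under μ[|S]
  have hmc : Measurable[MeasurableSpace.comap (fun ω => (Lstar ω, Y ω)) inferInstance]
      (fun ω => (Lstar ω, Y ω)) := measurable_iff_comap_le.mpr le_rfl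
  have hφ'sm : StronglyMeasurable[MeasurableSpace.comap (fun ω => (Lstar ω, Y ω)) inferInstance]
      (fun ω => (ηbar₁ (Lstar ω))⁻¹) :=
    (((hηbar₁.comp measurable_fst).inv).comp hmc).stronglyMeasurable
  have hφ'bd : ∀ᵐ ω ∂(μ[|{ω | A ω = 1 ∧ R ω = 1}]), ‖(ηbar₁ (Lstar ω))⁻¹‖ ≤ ε'⁻¹ :=
    ae_of_all _ fun ω => by rw [Real.norm_eq_abs]; exact hhinv_bd ω
  have pull := condExp_stronglyMeasurable_mul_of_bound hm' hφ'sm hgcintS ε'⁻¹ hφ'bd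
  have F2a : ∫ ω, (ηbar₁ (Lstar ω))⁻¹ * g (L ω) (A ω) ∂(μ[|{ω | A ω = 1 ∧ R ω = 1}])
      = ∫ ω, (ηbar₁ (Lstar ω))⁻¹ * ε₁f (Lstar ω) (Y ω) ∂(μ[|{ω | A ω = 1 ∧ R ω = 1}]) := by
    have h1 := integral_condExp hm' (μ := μ[|{ω | A ω = 1 ∧ R ω = 1}])
      (f := (fun ω => (ηbar₁ (Lstar ω))⁻¹) * (fun ω => g (L ω) (A ω)))
    have h2 : ∫ ω, ((μ[|{ω | A ω = 1 ∧ R ω = 1}])[(fun ω => (ηbar₁ (Lstar ω))⁻¹)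
          * (fun ω => g (L ω) (A ω))|MeasurableSpace.comap
          (fun ω => (Lstar ω, Y ω)) inferInstance]) ω ∂(μ[|{ω | A ω = 1 ∧ R ω = 1}])
        = ∫ ω, (ηbar₁ (Lstar ω))⁻¹ * ε₁f (Lstar ω) (Y ω) ∂(μ[|{ω | A ω = 1 ∧ R ω = 1}]) := by
      refine integral_congr_ae ?_
      filter_upwards [pull, hε₁ver] with ω hp hv
      rw [hp]
      simp only [Pi.mul_apply]
      rw [← hv]
    calc ∫ ω, (ηbar₁ (Lstar ω))⁻¹ * g (L ω) (A ω) ∂(μ[|{ω | A ω = 1 ∧ R ω = 1}])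
        = ∫ ω, ((fun ω => (ηbar₁ (Lstar ω))⁻¹) * (fun ω => g (L ω) (A ω))) ω
            ∂(μ[|{ω | A ω = 1 ∧ R ω = 1}]) := rfl
      _ = ∫ ω, ((μ[|{ω | A ω = 1 ∧ R ω = 1}])[(fun ω => (ηbar₁ (Lstar ω))⁻¹)
            * (fun ω => g (L ω) (A ω))|MeasurableSpace.comap
            (fun ω => (Lstar ω, Y ω)) inferInstance]) ω ∂(μ[|{ω | A ω = 1 ∧ R ω = 1}]) := h1.symm
      _ = _ := h2
  -- truncation
  have htrunc_meas : Measurable (fun r : ℝ => max (-1) (min 1 r)) :=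
    measurable_const.max (measurable_const.min measurable_id)
  have htrunc_abs : ∀ r : ℝ, |max (-1) (min 1 r)| ≤ 1 := fun r =>
    abs_le.mpr ⟨le_max_left _ _, max_le (by norm_num) (min_le_left _ _)⟩
  have htrunc_eq : ∀ r : ℝ, |r| ≤ 1 → max (-1) (min 1 r) = r := fun r h => by
    obtain ⟨h1, h2⟩ := abs_le.mp h
    rw [min_eq_right h2, max_eq_right h1]
  -- F1 : ∫ A R (h⁻¹ e) = ∫ A k (h⁻¹ e)
  have F1 : ∫ ω, A ω * R ω * ((ηbar₁ (Lstar ω))⁻¹ * εbar₁ (Lstar ω) (Y ω)) ∂μ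
      = ∫ ω, A ω * (η (Lstar ω) 1) * ((ηbar₁ (Lstar ω))⁻¹ * εbar₁ (Lstar ω) (Y ω)) ∂μ := by
    have hG : Measurable fun z : ((Fin p → ℝ) × ℝ) × ((Fin q → ℝ) × ℝ) =>
        z.1.2 * ((ηbar₁ z.1.1)⁻¹ * εbar₁ z.1.1 z.2.2) :=
      measurable_fst.snd.mul (((hηbar₁.comp measurable_fst.fst).inv).mul
        (hεbar₁.comp (measurable_fst.fst.prodMk measurable_snd.snd)))
    have h0 := mar _ hG
    calc ∫ ω, A ω * R ω * ((ηbar₁ (Lstar ω))⁻¹ * εbar₁ (Lstar ω) (Y ω)) ∂μ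
        = ∫ ω, R ω * (A ω * ((ηbar₁ (Lstar ω))⁻¹ * εbar₁ (Lstar ω) (Y ω))) ∂μ :=
          integral_congr_ae (ae_of_all _ fun ω => by ring)
      _ = ∫ ω, η (Lstar ω) (A ω) * (A ω * ((ηbar₁ (Lstar ω))⁻¹ * εbar₁ (Lstar ω) (Y ω))) ∂μ := h0
      _ = ∫ ω, A ω * (η (Lstar ω) 1) * ((ηbar₁ (Lstar ω))⁻¹ * εbar₁ (Lstar ω) (Y ω)) ∂μ := by
          refine integral_congr_ae (ae_of_all _ fun ω => ?_)
          rcases hA01 ω with h | h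
          · simp only [h]; ring
          · simp only [h]; ring
  -- F2 : ∫ A R (h⁻¹ g) = ∫ A k (h⁻¹ Ef)
  have F2 : ∫ ω, A ω * R ω * ((ηbar₁ (Lstar ω))⁻¹ * g (L ω) (A ω)) ∂μ
      = ∫ ω, A ω * (η (Lstar ω) 1) * ((ηbar₁ (Lstar ω))⁻¹ * ε₁f (Lstar ω) (Y ω)) ∂μ := by
    have hG : Measurable fun z : ((Fin p → ℝ) × ℝ) × ((Fin q → ℝ) × ℝ) =>
        z.1.2 * ((ηbar₁ z.1.1)⁻¹ * max (-1) (min 1 (ε₁f z.1.1 z.2.2))) :=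
      measurable_fst.snd.mul (((hηbar₁.comp measurable_fst.fst).inv).mul
        (htrunc_meas.comp (hε₁f.comp (measurable_fst.fst.prodMk measurable_snd.snd))))
    have h0 := mar _ hG
    calc ∫ ω, A ω * R ω * ((ηbar₁ (Lstar ω))⁻¹ * g (L ω) (A ω)) ∂μ
        = (μ {ω | A ω = 1 ∧ R ω = 1}).toReal
            * ∫ ω, (ηbar₁ (Lstar ω))⁻¹ * g (L ω) (A ω) ∂(μ[|{ω | A ω = 1 ∧ R ω = 1}]) :=
          bridge _
      _ = (μ {ω | A ω = 1 ∧ R ω = 1}).toReal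
            * ∫ ω, (ηbar₁ (Lstar ω))⁻¹ * ε₁f (Lstar ω) (Y ω) ∂(μ[|{ω | A ω = 1 ∧ R ω = 1}]) := by
          rw [F2a]
      _ = ∫ ω, A ω * R ω * ((ηbar₁ (Lstar ω))⁻¹ * ε₁f (Lstar ω) (Y ω)) ∂μ := (bridge _).symm
      _ = ∫ ω, R ω * (A ω * ((ηbar₁ (Lstar ω))⁻¹ * max (-1) (min 1 (ε₁f (Lstar ω) (Y ω))))) ∂μ := by
          refine integral_congr_ae ?_
          filter_upwards [hEfA] with ω hb
          rcases hA01 ω with h | h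
          · simp only [h]; ring
          · simp only [htrunc_eq _ (hb h), h]; ring
      _ = ∫ ω, η (Lstar ω) (A ω)
            * (A ω * ((ηbar₁ (Lstar ω))⁻¹ * max (-1) (min 1 (ε₁f (Lstar ω) (Y ω))))) ∂μ := h0
      _ = ∫ ω, A ω * (η (Lstar ω) 1) * ((ηbar₁ (Lstar ω))⁻¹ * ε₁f (Lstar ω) (Y ω)) ∂μ := by
          refine integral_congr_ae ?_
          filter_upwards [hEfA] with ω hb
          rcases hA01 ω with h | h
          · simp only [h]; ring
          · simp only [htrunc_eq _ (hb h), h]; ring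
  -- integrability of the six canonical integrands
  have hCε : (0:ℝ) ≤ Cε := (abs_nonneg _).trans (hεbar₁bd (fun _ => 0) 0)
  have hεinv : (0:ℝ) ≤ ε'⁻¹ := inv_nonneg.mpr hε'.le
  have int1 : Integrable (fun ω => A ω * εbar₁ (Lstar ω) (Y ω)) μ := by
    refine aux_int μ (hA.mul he).aestronglyMeasurable (C := Cε) (ae_of_all _ fun ω => ?_)
    rw [abs_mul]
    calc |A ω| * |εbar₁ (Lstar ω) (Y ω)| ≤ 1 * Cε :=
        mul_le_mul (hAabs ω) (hεbar₁bd _ _) (abs_nonneg _) zero_le_one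
      _ = Cε := one_mul _
  have int2 : Integrable (fun ω => A ω * R ω * ((ηbar₁ (Lstar ω))⁻¹ * εbar₁ (Lstar ω) (Y ω))) μ := by
    refine aux_int μ ((hA.mul hR).mul (hh.inv.mul he)).aestronglyMeasurable
      (C := ε'⁻¹ * Cε) (ae_of_all _ fun ω => ?_)
    rw [abs_mul, abs_mul, abs_mul]
    have h2 : |A ω| * |R ω| ≤ 1 := by
      calc |A ω| * |R ω| ≤ 1 * 1 := mul_le_mul (hAabs ω) (hRabs ω) (abs_nonneg _) zero_le_one
        _ = 1 := one_mul 1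
    calc |A ω| * |R ω| * (|(ηbar₁ (Lstar ω))⁻¹| * |εbar₁ (Lstar ω) (Y ω)|)
        ≤ 1 * (ε'⁻¹ * Cε) := by
          refine mul_le_mul h2 (mul_le_mul (hhinv_bd ω) (hεbar₁bd _ _) (abs_nonneg _)
            (by positivity)) (by positivity) zero_le_one
      _ = ε'⁻¹ * Cε := one_mul _
  have int3 : Integrable (fun ω => A ω * ε₁f (Lstar ω) (Y ω)) μ := by
    refine aux_int μ (hA.mul hEf).aestronglyMeasurable (C := 1) ?_
    filter_upwards [hEfA] with ω hb
    rcases hA01 ω with h | h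
    · rw [h]; simp
    · rw [h, abs_mul, abs_one, one_mul]; exact hb h
  have int6 : Integrable (fun ω => A ω * (η (Lstar ω) 1)
      * ((ηbar₁ (Lstar ω))⁻¹ * εbar₁ (Lstar ω) (Y ω))) μ := by
    refine aux_int μ ((hA.mul hk).mul (hh.inv.mul he)).aestronglyMeasurable
      (C := ε'⁻¹ * Cε) ?_
    filter_upwards [hηA_abs] with ω hb
    rcases hA01 ω with h | h
    · rw [h]; simpa using mul_nonneg hεinv hCε
    · rw [h] at hb
      rw [h, abs_mul, abs_mul, abs_mul, abs_one, one_mul]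
      calc |η (Lstar ω) 1| * (|(ηbar₁ (Lstar ω))⁻¹| * |εbar₁ (Lstar ω) (Y ω)|)
          ≤ 1 * (ε'⁻¹ * Cε) := by
            refine mul_le_mul hb (mul_le_mul (hhinv_bd ω) (hεbar₁bd _ _) (abs_nonneg _)
              (by positivity)) (by positivity) zero_le_one
        _ = ε'⁻¹ * Cε := one_mul _
  have int7 : Integrable (fun ω => A ω * (η (Lstar ω) 1)
      * ((ηbar₁ (Lstar ω))⁻¹ * ε₁f (Lstar ω) (Y ω))) μ := by
    refine aux_int μ ((hA.mul hk).mul (hh.inv.mul hEf)).aestronglyMeasurable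
      (C := ε'⁻¹) ?_
    filter_upwards [hηA_abs, hEfA] with ω hb hb2
    rcases hA01 ω with h | h
    · rw [h]; simpa using hεinv
    · rw [h] at hb
      rw [h, abs_mul, abs_mul, abs_mul, abs_one, one_mul]
      calc |η (Lstar ω) 1| * (|(ηbar₁ (Lstar ω))⁻¹| * |ε₁f (Lstar ω) (Y ω)|)
          ≤ 1 * (ε'⁻¹ * 1) := by
            refine mul_le_mul hb (mul_le_mul (hhinv_bd ω) (hb2 h) (abs_nonneg _)
              (by positivity)) (by positivity) zero_le_one
        _ = ε'⁻¹ := by ring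
  -- final assembly
  have split1 : ∫ ω, A ω * (1 - R ω / ηbar₁ (Lstar ω)) * εbar₁ (Lstar ω) (Y ω) ∂μ
      = ∫ ω, A ω * εbar₁ (Lstar ω) (Y ω) ∂μ
        - ∫ ω, A ω * R ω * ((ηbar₁ (Lstar ω))⁻¹ * εbar₁ (Lstar ω) (Y ω)) ∂μ := by
    rw [← integral_sub int1 int2]
    refine integral_congr_ae (ae_of_all _ fun ω => ?_)
    simp only [div_eq_mul_inv, Pi.sub_apply]
    ring
  have split2' : ∫ ω, A ω * R ω * g (L ω) (A ω) / ηbar₁ (Lstar ω) ∂μ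
      = ∫ ω, A ω * R ω * ((ηbar₁ (Lstar ω))⁻¹ * g (L ω) (A ω)) ∂μ := by
    refine integral_congr_ae (ae_of_all _ fun ω => ?_)
    simp only [div_eq_mul_inv]
    ring
  have split3 : ∫ ω, A ω * (εbar₁ (Lstar ω) (Y ω) - ε₁f (Lstar ω) (Y ω))
        * (1 - η (Lstar ω) 1 / ηbar₁ (Lstar ω)) ∂μ
      = (∫ ω, A ω * εbar₁ (Lstar ω) (Y ω) ∂μ
          - ∫ ω, A ω * (η (Lstar ω) 1) * ((ηbar₁ (Lstar ω))⁻¹ * εbar₁ (Lstar ω) (Y ω)) ∂μ)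
        - (∫ ω, A ω * ε₁f (Lstar ω) (Y ω) ∂μ
          - ∫ ω, A ω * (η (Lstar ω) 1) * ((ηbar₁ (Lstar ω))⁻¹ * ε₁f (Lstar ω) (Y ω)) ∂μ) := by
    calc ∫ ω, A ω * (εbar₁ (Lstar ω) (Y ω) - ε₁f (Lstar ω) (Y ω))
            * (1 - η (Lstar ω) 1 / ηbar₁ (Lstar ω)) ∂μ
        = ∫ ω, (A ω * εbar₁ (Lstar ω) (Y ω)
              - A ω * (η (Lstar ω) 1) * ((ηbar₁ (Lstar ω))⁻¹ * εbar₁ (Lstar ω) (Y ω)))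
            - (A ω * ε₁f (Lstar ω) (Y ω)
              - A ω * (η (Lstar ω) 1) * ((ηbar₁ (Lstar ω))⁻¹ * ε₁f (Lstar ω) (Y ω))) ∂μ :=
          integral_congr_ae (ae_of_all _ fun ω => by
            simp only [div_eq_mul_inv, Pi.sub_apply]; ring)
      _ = (∫ ω, A ω * εbar₁ (Lstar ω) (Y ω)
              - A ω * (η (Lstar ω) 1) * ((ηbar₁ (Lstar ω))⁻¹ * εbar₁ (Lstar ω) (Y ω)) ∂μ)
          - ∫ ω, A ω * ε₁f (Lstar ω) (Y ω)
              - A ω * (η (Lstar ω) 1) * ((ηbar₁ (Lstar ω))⁻¹ * ε₁f (Lstar ω) (Y ω)) ∂μ :=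
          integral_sub (int1.sub int6) (int3.sub int7)
      _ = (∫ ω, A ω * εbar₁ (Lstar ω) (Y ω) ∂μ
            - ∫ ω, A ω * (η (Lstar ω) 1) * ((ηbar₁ (Lstar ω))⁻¹ * εbar₁ (Lstar ω) (Y ω)) ∂μ)
          - (∫ ω, A ω * ε₁f (Lstar ω) (Y ω) ∂μ
            - ∫ ω, A ω * (η (Lstar ω) 1) * ((ηbar₁ (Lstar ω))⁻¹ * ε₁f (Lstar ω) (Y ω)) ∂μ) :=
          congrArg₂ Sub.sub (integral_sub int1 int6) (integral_sub int3 int7)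
  rw [split1, split2', split3, F1, F2]
  ring
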